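/- Descartes's rule of signs (negative part): for every nonzero real polynomial P, the number of negative real roots of P, counted with multiplicity, is at most the number of sign permanences of P, i.e. z⁻(P) ≤ c(P). -/

import Mathlib

open Polynomial

/-- Number of sign changes in a list of reals, after discarding zero entries:
the number of consecutive pairs with negative product. -/
noncomputable def signChanges (l : List ℝ) : ℕ :=
  let l' := l.filter (fun x => decide (x ≠ 0))
  (l'.zip l'.tail).countP (fun p => decide (p.1 * p.2 < 0))

/-- `v(P)`: number of sign changes in the sequence of nonzero coefficients of `P`,
listed in order of increasing degree. -/
noncomputable def v (P : Polynomial ℝ) : ℕ :=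
  signChanges (List.ofFn fun i : Fin (P.natDegree + 1) => P.coeff i)

/-- `c(P) := v(P(-X))`: the number of sign permanences of `P` (minimization convention). -/
noncomputable def c (P : Polynomial ℝ) : ℕ :=
  v (P.comp (-Polynomial.X))

/-- `z⁺(P)`: number of positive real roots of `P`, with multiplicity. -/
noncomputable def zpos (P : Polynomial ℝ) : ℕ :=
  (P.roots.filter (fun x => 0 < x)).card

/-- `z⁻(P)`: number of negative real roots of `P`, with multiplicity. -/
noncomputable def zneg (P : Polynomial ℝ) : ℕ :=
  (P.roots.filter (fun x => x < 0)).card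


open List

noncomputable def countAdj (l : List ℝ) : ℕ :=
  (l.zip l.tail).countP (fun p => decide (p.1 * p.2 < 0))

@[simp] lemma countAdj_nil : countAdj [] = 0 := rfl
@[simp] lemma countAdj_single (x : ℝ) : countAdj [x] = 0 := rfl
lemma countAdj_cons_cons (x y : ℝ) (t : List ℝ) :
    countAdj (x :: y :: t) = (if x * y < 0 then 1 else 0) + countAdj (y :: t) := by
  simp only [countAdj, List.zip, List.tail, List.zipWith, List.countP_cons]
  split <;> simp_all <;> omega

lemma countAdj_cons_ge (x : ℝ) (m : List ℝ) : countAdj m ≤ countAdj (x :: m) := by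
  cases m with
  | nil => simp
  | cons a t => rw [countAdj_cons_cons]; omega

lemma sgn_pos {a b c : ℝ} (h1 : a * b < 0) (h2 : c * b < 0) : 0 < a * c := by
  have hb : b ≠ 0 := by rintro rfl; simp at h1
  nlinarith [mul_pos_of_neg_of_neg h1 h2, mul_self_pos.mpr hb]

lemma sgn_neg {a b c : ℝ} (h1 : 0 < a * b) (h2 : c * b < 0) : a * c < 0 := by
  have hb : b ≠ 0 := by rintro rfl; simp at h2
  nlinarith [mul_neg_of_pos_of_neg h1 h2, mul_self_pos.mpr hb]

lemma countAdj_cons_le {x : ℝ} (hx : x ≠ 0) :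
    ∀ {s m : List ℝ}, (∀ y ∈ m, y ≠ 0) → s <+ m →
      countAdj (x :: s) ≤ countAdj (x :: m) := by
  intro s m hm h
  induction h generalizing x with
  | slnil => exact le_refl _
  | @cons s m y h ih =>
      have hy : y ≠ 0 := hm y (List.mem_cons_self)
      have hm' : ∀ z ∈ m, z ≠ 0 := fun z hz => hm z (List.mem_cons_of_mem _ hz)
      have h1 := ih hx hm'
      have h2 : countAdj (x :: m) ≤ countAdj (x :: y :: m) := by
        cases m with
        | nil => simp [countAdj_cons_cons]
        | cons z t =>
            have hz : z ≠ 0 := hm' z (List.mem_cons_self)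
            rw [countAdj_cons_cons, countAdj_cons_cons x y, countAdj_cons_cons y z]
            have : (if x * z < 0 then 1 else 0) ≤
                (if x * y < 0 then 1 else 0) + (if y * z < 0 then 1 else 0) := by
              by_cases hxz : x * z < 0
              · simp only [hxz, if_true]
                by_cases hxy : x * y < 0
                · simp [hxy]
                · have hxy' : 0 < x * y := by
                    rcases (not_lt.mp hxy).eq_or_lt' with h | h
                    · exact absurd h (mul_ne_zero hx hy)
                    · exact h
                  have hyz : y * z < 0 := by
                    have := sgn_neg (a := y) (b := x) (c := z)
                    exact this (by linarith [mul_comm x y]) (by linarith [mul_comm x z])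
                  simp [hyz]
              · simp [hxz]
            omega
      exact le_trans h1 h2
  | @cons_cons s m y h ih =>
      have hy : y ≠ 0 := hm y (List.mem_cons_self)
      have hm' : ∀ z ∈ m, z ≠ 0 := fun z hz => hm z (List.mem_cons_of_mem _ hz)
      have h1 := ih hy hm'
      rw [countAdj_cons_cons, countAdj_cons_cons x y m]
      omega


lemma signChanges_eq (l : List ℝ) :
    signChanges l = countAdj (l.filter (fun x => decide (x ≠ 0))) := rfl

lemma countAdj_mono : ∀ {s m : List ℝ}, (∀ y ∈ m, y ≠ 0) → s <+ m →
    countAdj s ≤ countAdj m := by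
  intro s m hm h
  cases h with
  | slnil => exact le_refl _
  | @cons s m y h =>
      have hy : y ≠ 0 := hm y (List.mem_cons_self)
      have hm' : ∀ z ∈ m, z ≠ 0 := fun z hz => hm z (List.mem_cons_of_mem _ hz)
      calc countAdj s ≤ countAdj (y :: s) := countAdj_cons_ge _ _
        _ ≤ countAdj (y :: m) := countAdj_cons_le hy hm' h
  | @cons_cons s m y h =>
      have hy : y ≠ 0 := hm y (List.mem_cons_self)
      have hm' : ∀ z ∈ m, z ≠ 0 := fun z hz => hm z (List.mem_cons_of_mem _ hz)
      exact countAdj_cons_le hy hm' h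

lemma countAdj_of_chain : ∀ {s : List ℝ}, s.Chain' (fun a b => a * b < 0) →
    countAdj s = s.length - 1
  | [], _ => rfl
  | [_], _ => rfl
  | x :: y :: t, h => by
      rw [List.Chain', List.isChain_cons_cons] at h
      have := countAdj_of_chain h.2
      rw [countAdj_cons_cons, this]
      simp only [h.1, if_true, List.length_cons]
      omega

/-- extraction: a maximal alternating sub-chain, starting at the head -/
lemma exists_chain : ∀ (m : List ℝ), (∀ y ∈ m, y ≠ 0) → m ≠ [] →
    ∃ s : List ℝ, s <+ m ∧ s.Chain' (fun a b => a * b < 0) ∧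
      s.length = countAdj m + 1 ∧ s.head? = m.head?
  | [], _, hne => absurd rfl hne
  | [x], _, _ => ⟨[x], List.Sublist.refl _, List.isChain_singleton _, by simp, rfl⟩
  | x :: y :: t, hm, _ => by
      have hx : x ≠ 0 := hm x (List.mem_cons_self)
      have hy : y ≠ 0 := hm y (by simp)
      have hm' : ∀ z ∈ y :: t, z ≠ 0 := fun z hz => hm z (List.mem_cons_of_mem _ hz)
      obtain ⟨s', hsub, hch, hlen, hhead⟩ := exists_chain (y :: t) hm' (by simp)
      have hs'ne : s' ≠ [] := by
        intro h; rw [h] at hlen; simp at hlen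
      obtain ⟨a, s'', rfl⟩ : ∃ a s'', s' = a :: s'' := by
        cases s' with
        | nil => exact absurd rfl hs'ne
        | cons a s'' => exact ⟨a, s'', rfl⟩
      obtain rfl : y = a := by
        simp only [List.head?_cons] at hhead
        exact Option.some_injective _ hhead.symm
      by_cases hxy : x * y < 0
      · refine ⟨x :: y :: s'', List.Sublist.cons₂ _ hsub, ?_, ?_, rfl⟩
        · rw [List.Chain', List.isChain_cons_cons]; exact ⟨hxy, hch⟩
        · rw [countAdj_cons_cons]
          simp only [hxy, if_true, List.length_cons] at *
          omega
      · have hcount : countAdj (x :: y :: t) = countAdj (y :: t) := by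
          rw [countAdj_cons_cons]; simp [hxy]
        have hxy' : 0 < x * y := by
          rcases (not_lt.mp hxy).eq_or_lt' with h | h
          · exact absurd h (mul_ne_zero hx hy)
          · exact h
        cases s'' with
        | nil =>
            refine ⟨[x], (List.singleton_sublist.mpr (List.mem_cons_self)),
              List.isChain_singleton _, ?_, rfl⟩
            simp only [List.length_cons, List.length_nil] at hlen
            rw [hcount]
            simp
            omega
        | cons b s₃ =>
            refine ⟨x :: b :: s₃, ?_, ?_, ?_, rfl⟩
            · exact List.Sublist.cons₂ _ ((List.sublist_cons_self y (b :: s₃)).trans hsub)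
            · rw [List.Chain', List.isChain_cons_cons] at hch ⊢
              refine ⟨?_, hch.2⟩
              exact sgn_neg hxy' (by rw [mul_comm b y]; exact hch.1)
            · rw [hcount]
              simpa using hlen

lemma sublist_range_of_pairwise (js : List ℕ) (h : js.Pairwise (· < ·)) :
    ∀ (n : ℕ), (∀ x ∈ js, x < n) → js <+ List.range n := by
  induction js using List.reverseRecOn with
  | nil => intro n _; exact (List.nil_sublist _)
  | append_singleton t a ih =>
      intro n hb
      rw [List.pairwise_append] at h
      have h1 : t.Pairwise (· < ·) := h.1
      have h2 : ∀ x ∈ t, x < a := fun x hx => h.2.2 x hx a (by simp)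
      have ha : a < n := hb a (by simp)
      have : t ++ [a] <+ List.range a ++ [a] := (ih h1 a h2).append (List.Sublist.refl _)
      rw [← List.range_succ] at this
      exact this.trans (List.range_sublist.mpr ha)

section Seq

variable {f g : ℕ → ℝ} {r : ℝ}

lemma seq_up (hr : 0 < r) (hg : ∀ m, g (m + 1) = f m - r * f (m + 1)) {i : ℕ}
    (hi : 0 < f i) : ∀ (d : ℕ), (∀ m, i < m → m ≤ i + d → g m ≤ 0) → 0 < f (i + d) := by
  intro d
  induction d with
  | zero => intro _; simpa using hi
  | succ d ih =>
      intro h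
      have hd : 0 < f (i + d) := ih (fun m h1 h2 => h m h1 (by omega))
      have hgd : g (i + d + 1) ≤ 0 := h (i + d + 1) (by omega) (by omega)
      rw [hg (i + d)] at hgd
      have : i + (d + 1) = i + d + 1 := by omega
      rw [this]
      nlinarith

lemma witness_mid (hr : 0 < r) (hg : ∀ m, g (m + 1) = f m - r * f (m + 1)) {i j : ℕ}
    (hij : i < j) (hfij : f i * f j < 0) : ∃ m, i < m ∧ m ≤ j ∧ 0 < g m * f i := by
  rcases lt_trichotomy (f i) 0 with hfi | hfi | hfi
  · -- f i < 0, f j > 0 ; apply seq_up to -f, -g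
    have hfj : 0 < f j := by nlinarith
    by_contra hcon
    push_neg at hcon
    have key := seq_up (f := fun n => -f n) (g := fun n => -g n) hr
      (fun m => by simp [hg m]; ring) (i := i) (by simpa using hfi) (j - i)
      (fun m h1 h2 => by
        have := hcon m h1 (by omega)
        simp only [neg_nonpos]
        nlinarith)
    have : i + (j - i) = j := by omega
    rw [this] at key
    simp at key
    linarith
  · rw [hfi] at hfij; simp at hfij
  · have hfj : f j < 0 := by nlinarith
    by_contra hcon
    push_neg at hcon
    have key := seq_up hr hg (i := i) hfi (j - i)
      (fun m h1 h2 => by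
        have := hcon m h1 (by omega)
        nlinarith)
    have : i + (j - i) = j := by omega
    rw [this] at key
    linarith

lemma seq_dn (hr : 0 < r) (hg0 : g 0 = -(r * f 0)) (hg : ∀ m, g (m + 1) = f m - r * f (m + 1)) :
    ∀ (i : ℕ), (∀ m, m ≤ i → 0 ≤ g m) → f i ≤ 0 := by
  intro i
  induction i with
  | zero =>
      intro h
      have := h 0 (le_refl _)
      rw [hg0] at this
      nlinarith
  | succ i ih =>
      intro h
      have hi : f i ≤ 0 := ih (fun m hm => h m (by omega))
      have := h (i + 1) (le_refl _)
      rw [hg (i)] at this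
      nlinarith

lemma witness_first (hr : 0 < r) (hg0 : g 0 = -(r * f 0))
    (hg : ∀ m, g (m + 1) = f m - r * f (m + 1)) {i : ℕ} (hfi : f i ≠ 0) :
    ∃ m, m ≤ i ∧ g m * f i < 0 := by
  rcases hfi.lt_or_gt with hfi | hfi
  · -- f i < 0 : apply to -f -g
    by_contra hcon
    push_neg at hcon
    have key := seq_dn (f := fun n => -f n) (g := fun n => -g n) hr
      (by simp [hg0]) (fun m => by simp [hg m]; ring) i
      (fun m hm => by
        have := hcon m hm
        simp only [neg_nonneg]
        nlinarith)
    simp at key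
    linarith
  · by_contra hcon
    push_neg at hcon
    have key := seq_dn hr hg0 hg i (fun m hm => by
      have := hcon m hm
      nlinarith)
    linarith

end Seq

lemma chain_lt_weaken {m j : ℕ} (hmj : m ≤ j) :
    ∀ {l : List ℕ}, List.Chain (· < ·) j l → List.Chain (· < ·) m l := by
  intro l hl
  cases hl with
  | singleton => exact List.Chain.nil
  | cons_cons h ht => exact List.Chain.cons (lt_of_le_of_lt hmj h) ht

lemma build2 {f g : ℕ → ℝ} {r : ℝ} (hr : 0 < r)
    (hg : ∀ m, g (m + 1) = f m - r * f (m + 1)) :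
    ∀ (is : List ℕ) (i : ℕ), List.Chain (· < ·) i is →
      ((i :: is).map f).Chain' (fun a b => a * b < 0) →
      ∃ ms : List ℕ, List.Chain (· < ·) i ms ∧
        (ms.map g).Chain' (fun a b => a * b < 0) ∧
        List.Forall₂ (fun m k => m ≤ k ∧ g m * f k < 0) ms is := by
  intro is
  induction is with
  | nil => intro i _ _; exact ⟨[], List.Chain.nil, List.isChain_nil, List.Forall₂.nil⟩
  | cons j t ih =>
      intro i hchain hmap
      rw [List.Chain, List.chain_cons] at hchain
      obtain ⟨hij, hchain'⟩ := hchain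
      have hfij : f i * f j < 0 := by
        simp only [List.map_cons, List.Chain', List.isChain_cons_cons] at hmap
        exact hmap.1
      have hmap' : ((j :: t).map f).Chain' (fun a b => a * b < 0) := by
        simp only [List.map_cons, List.Chain', List.isChain_cons_cons] at hmap ⊢
        exact hmap.2
      obtain ⟨m, him, hmj, hgm⟩ := witness_mid hr hg hij hfij
      obtain ⟨ms', hchain'', hgchain, hF2⟩ := ih j hchain' hmap'
      have hgmj : g m * f j < 0 := sgn_neg hgm (by rw [mul_comm] at hfij; exact hfij)
      refine ⟨m :: ms', List.chain_cons.mpr ⟨him, chain_lt_weaken hmj hchain''⟩, ?_,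
        List.Forall₂.cons ⟨hmj, hgmj⟩ hF2⟩
      cases ms' with
      | nil => simp [List.Chain']
      | cons m₁ t₁ =>
          cases t with
          | nil => cases hF2
          | cons k₁ t' =>
            cases hF2 with
            | cons hrel hF2' =>
              have hfjk : f j * f k₁ < 0 := by
                simp only [List.map_cons, List.Chain', List.isChain_cons_cons] at hmap'
                exact hmap'.1
              have h1 : 0 < g m₁ * f j := sgn_pos hrel.2 hfjk
              have h2 : g m * g m₁ < 0 := by
                have := sgn_neg h1 hgmj
                rw [mul_comm] at this; exact this
              simp only [List.map_cons, List.Chain', List.isChain_cons_cons] at hgchain ⊢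
              exact ⟨h2, hgchain⟩

lemma chain_lt_append_last {l : List ℕ} :
    ∀ {a b : ℕ}, List.Chain (· < ·) a l → (∀ x ∈ a :: l, x < b) →
      List.Chain (· < ·) a (l ++ [b]) := by
  induction l with
  | nil =>
      intro a b _ hb
      exact List.chain_cons.mpr ⟨hb a (by simp), List.Chain.nil⟩
  | cons c t ih =>
      intro a b h hb
      rw [List.Chain, List.chain_cons] at h
      exact List.chain_cons.mpr ⟨h.1, ih h.2 (fun x hx => hb x (by
        simp only [List.mem_cons] at hx ⊢
        tauto))⟩

lemma forall₂_mem_left {R : ℕ → ℕ → Prop} :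
    ∀ {l₁ l₂ : List ℕ}, List.Forall₂ R l₁ l₂ → ∀ a ∈ l₁, ∃ b ∈ l₂, R a b := by
  intro l₁ l₂ h
  induction h with
  | nil => intro a ha; simp at ha
  | cons hr ht ih =>
      intro a ha
      rcases List.mem_cons.mp ha with rfl | h
      · exact ⟨_, by simp, hr⟩
      · obtain ⟨b, hb, hrb⟩ := ih a h
        exact ⟨b, by simp [hb], hrb⟩

lemma forall₂_getLast {R : ℕ → ℕ → Prop} :
    ∀ {l₁ l₂ : List ℕ}, List.Forall₂ R l₁ l₂ → ∀ (h : l₁ ≠ []),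
      ∃ (h₂ : l₂ ≠ []), R (l₁.getLast h) (l₂.getLast h₂) := by
  intro l₁ l₂ h
  induction h with
  | nil => intro h; exact absurd rfl h
  | @cons a b l₁ l₂ hr ht ih =>
      intro _
      cases l₁ with
      | nil =>
          cases ht
          exact ⟨by simp, by simpa using hr⟩
      | cons c t =>
          have hl₂ : l₂ ≠ [] := by
            cases ht; simp
          obtain ⟨h₂, hR⟩ := ih (by simp)
          refine ⟨by simp [List.ne_nil_of_length_pos, List.length_pos_of_ne_nil h₂], ?_⟩
          rw [List.getLast_cons (by simp : (c :: t) ≠ []), List.getLast_cons hl₂]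
          exact hR

lemma key_seq {f g : ℕ → ℝ} {r : ℝ} (hr : 0 < r) (hg0 : g 0 = -(r * f 0))
    (hg : ∀ m, g (m + 1) = f m - r * f (m + 1)) (M : ℕ) (hM1 : f (M + 1) = 0)
    (i0 : ℕ) (rest : List ℕ) (hch : List.Chain (· < ·) i0 rest)
    (hmap : ((i0 :: rest).map f).Chain' (fun a b => a * b < 0))
    (hbound : ∀ x ∈ i0 :: rest, x ≤ M)
    (hlastsign : 0 < f (List.getLast (i0 :: rest) (by simp)) * f M) :
    ∃ ms : List ℕ, ms.Chain' (· < ·) ∧ (ms.map g).Chain' (fun a b => a * b < 0) ∧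
      ms.length = rest.length + 2 ∧ ∀ x ∈ ms, x < M + 2 := by
  have hgM : g (M + 1) = f M := by rw [hg M, hM1]; ring
  have hfM : f M ≠ 0 := by
    intro h
    rw [h] at hlastsign; simp at hlastsign
  have hfi0 : f i0 ≠ 0 := by
    cases rest with
    | nil =>
        have : List.getLast [i0] (by simp) = i0 := rfl
        rw [this] at hlastsign
        intro h; rw [h] at hlastsign; simp at hlastsign
    | cons j t =>
        simp only [List.map_cons, List.Chain', List.isChain_cons_cons] at hmap
        intro h; rw [h] at hmap; simp at hmap
  obtain ⟨m0, hm0le, hm0⟩ := witness_first hr hg0 hg hfi0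
  obtain ⟨ms1, hch1, hgch1, hF2⟩ := build2 hr hg rest i0 hch hmap
  have hlen1 : ms1.length = rest.length := hF2.length_eq
  have hbound1 : ∀ x ∈ ms1, x ≤ M := by
    intro x hx
    obtain ⟨b, hb, hle, _⟩ := forall₂_mem_left hF2 x hx
    exact le_trans hle (hbound b (by simp [hb]))
  refine ⟨m0 :: (ms1 ++ [M + 1]), ?_, ?_, ?_, ?_⟩
  · -- strictly increasing
    have hchm0 : List.Chain (· < ·) m0 ms1 := chain_lt_weaken hm0le hch1
    apply chain_lt_append_last hchm0
    intro x hx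
    rcases List.mem_cons.mp hx with rfl | hx
    · have : x ≤ M := le_trans hm0le (hbound i0 (by simp))
      omega
    · have := hbound1 x hx; omega
  · -- alternating signs
    rw [List.map_cons, List.Chain', List.isChain_cons]
    constructor
    · -- relation m0 → head
      intro y hy
      cases ms1 with
      | nil =>
          have hrest : rest = [] := List.forall₂_nil_left_iff.mp hF2
          subst hrest
          simp only [List.nil_append, List.map_cons, List.map_nil, List.head?_cons,
            Option.mem_def, Option.some.injEq] at hy
          subst hy
          rw [hgM]
          have h0 : List.getLast [i0] (by simp) = i0 := rfl
          rw [h0] at hlastsign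
          have := sgn_neg (a := f M) (b := f i0) (c := g m0)
            (by rw [mul_comm] at hlastsign; exact hlastsign) hm0
          rw [mul_comm] at this; exact this
      | cons m1 t1 =>
          simp only [List.cons_append, List.map_cons, List.head?_cons, Option.mem_def,
            Option.some.injEq] at hy
          subst hy
          cases rest with
          | nil => cases hF2
          | cons k1 t' =>
              cases hF2 with
              | cons hrel hF2' =>
                  have hfik : f i0 * f k1 < 0 := by
                    simp only [List.map_cons, List.Chain', List.isChain_cons_cons] at hmap
                    exact hmap.1
                  have h1 : 0 < g m1 * f i0 := sgn_pos hrel.2 hfik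
                  have h2 := sgn_neg h1 hm0
                  rw [mul_comm] at h2; exact h2
    · -- chain on ms1 ++ [M+1]
      rw [List.map_append, List.isChain_append]
      refine ⟨hgch1, by simp, ?_⟩
      intro x hx y hy
      simp only [List.map_cons, List.map_nil, List.head?_cons, Option.mem_def,
        Option.some.injEq] at hy
      subst hy
      rw [hgM]
      cases ms1 with
      | nil => simp at hx
      | cons m1 t1 =>
          have hne : (m1 :: t1) ≠ [] := by simp
          obtain ⟨hrne, hR⟩ := forall₂_getLast hF2 hne
          have hlast : (List.map g (m1 :: t1)).getLast? =
              some (g ((m1 :: t1).getLast hne)) := by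
            rw [List.getLast?_eq_getLast_of_ne_nil (by simp), List.getLast_map]
          rw [hlast] at hx
          simp only [Option.mem_def, Option.some.injEq] at hx
          subst hx
          have hgl : List.getLast (i0 :: rest) (by simp) = rest.getLast hrne :=
            List.getLast_cons hrne
          rw [hgl] at hlastsign
          have := sgn_neg (a := f M) (b := f (rest.getLast hrne))
            (c := g ((m1 :: t1).getLast hne))
            (by rw [mul_comm] at hlastsign; exact hlastsign) hR.2
          rw [mul_comm] at this; exact this
  · simp [hlen1]
  · intro x hx
    rcases List.mem_cons.mp hx with rfl | hx
    · have : x ≤ M := le_trans hm0le (hbound i0 (by simp)); omega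
    · rcases List.mem_append.mp hx with hx | hx
      · have := hbound1 x hx; omega
      · simp at hx; omega

lemma chain'_alt_ne_zero : ∀ {l : List ℝ}, l.Chain' (fun a b => a * b < 0) →
    2 ≤ l.length → ∀ y ∈ l, y ≠ 0
  | x :: y :: t, h, _ => by
      rw [List.Chain', List.isChain_cons_cons] at h
      have hx : x ≠ 0 := by
        intro hx0; rw [hx0] at h; simp at h
      have hy : y ≠ 0 := by
        intro hy0; rw [hy0] at h; simp at h
      intro z hz
      rcases List.mem_cons.mp hz with rfl | hz
      · exact hx
      · cases t with
        | nil => simp at hz; subst hz; exact hy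
        | cons b t' =>
            rcases List.mem_cons.mp hz with rfl | hz
            · exact hy
            · exact chain'_alt_ne_zero h.2 (by simp) z (by simp [hz])

lemma pairwise_le_getLast : ∀ {l : List ℕ}, l.Pairwise (· < ·) → (h : l ≠ []) →
    ∀ x ∈ l, x ≤ l.getLast h := by
  intro l hp h
  induction l with
  | nil => exact absurd rfl h
  | cons a t ih =>
      rw [List.pairwise_cons] at hp
      intro x hx
      cases t with
      | nil =>
          simp at hx; subst hx; simp
      | cons b t' =>
          rw [List.getLast_cons (by simp : (b :: t') ≠ [])]
          rcases List.mem_cons.mp hx with rfl | hx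
          · exact le_of_lt (lt_of_lt_of_le (hp.1 b (by simp))
              (ih hp.2 (by simp) b (by simp)))
          · exact ih hp.2 (by simp) x hx

/-- the ofFn coefficient list -/
lemma ofFn_coeff_eq (P : Polynomial ℝ) :
    (List.ofFn fun i : Fin (P.natDegree + 1) => P.coeff i)
      = (List.range (P.natDegree + 1)).map P.coeff := by
  rw [List.ofFn_eq_map, ← List.map_coe_finRange_eq_range, List.map_map]; rfl

/-- B1: lower bound for `v` from an alternating index chain -/
lemma v_ge_of_chain (P : Polynomial ℝ) (js : List ℕ) (hlen : 2 ≤ js.length)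
    (hch : js.Pairwise (· < ·)) (hbd : ∀ x ∈ js, x < P.natDegree + 1)
    (halt : (js.map P.coeff).Chain' (fun a b => a * b < 0)) :
    js.length - 1 ≤ v P := by
  have hsub : js.map P.coeff <+ (List.range (P.natDegree + 1)).map P.coeff :=
    (sublist_range_of_pairwise js hch _ hbd).map _
  rw [← ofFn_coeff_eq] at hsub
  have hnz : ∀ y ∈ js.map P.coeff, y ≠ 0 :=
    chain'_alt_ne_zero halt (by simpa using hlen)
  set l := List.ofFn fun i : Fin (P.natDegree + 1) => P.coeff i with hl
  have hsub2 : js.map P.coeff <+ l.filter (fun x => decide (x ≠ 0)) := by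
    have h1 : (js.map P.coeff).filter (fun x => decide (x ≠ 0)) = js.map P.coeff :=
      List.filter_eq_self.mpr (fun a ha => decide_eq_true (hnz a ha))
    rw [← h1]
    exact hsub.filter _
  have hmono := countAdj_mono (fun y hy => by
      have := List.of_mem_filter hy
      simpa using this) hsub2
  rw [countAdj_of_chain halt, List.length_map] at hmono
  have hv : v P = countAdj (l.filter (fun x => decide (x ≠ 0))) := signChanges_eq _
  rw [hv]
  exact hmono

/-- B2: extraction of a maximal alternating index chain -/
lemma exists_index_chain (P : Polynomial ℝ) (hP : P ≠ 0) :
    ∃ js : List ℕ, js ≠ [] ∧ js.Pairwise (· < ·) ∧ (∀ x ∈ js, x ≤ P.natDegree) ∧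
      (∀ x ∈ js, P.coeff x ≠ 0) ∧ (js.map P.coeff).Chain' (fun a b => a * b < 0) ∧
      js.length = v P + 1 := by
  set l := List.ofFn fun i : Fin (P.natDegree + 1) => P.coeff i with hl
  set m := l.filter (fun x => decide (x ≠ 0)) with hmm
  have hlead : P.coeff P.natDegree ≠ 0 := fun h => hP (Polynomial.leadingCoeff_eq_zero.mp h)
  have hmem : P.coeff P.natDegree ∈ l := by
    simp only [hl]
    exact List.mem_ofFn.mpr ⟨⟨P.natDegree, by omega⟩, rfl⟩
  have hmne : m ≠ [] := by
    have : P.coeff P.natDegree ∈ m :=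
      List.mem_filter_of_mem hmem (decide_eq_true hlead)
    exact List.ne_nil_of_mem this
  have hmnz : ∀ y ∈ m, y ≠ 0 := fun y hy => by
    have := List.of_mem_filter hy; simpa using this
  obtain ⟨s, hsub, hch, hslen, _⟩ := exists_chain m hmnz hmne
  have hsubl : s <+ l := hsub.trans (List.filter_sublist (l := l))
  obtain ⟨emb, hemb⟩ := List.sublist_iff_exists_fin_orderEmbedding_get_eq.mp hsubl
  have hllen : l.length = P.natDegree + 1 := by simp [hl]
  have hgetl : ∀ j : Fin l.length, l.get j = P.coeff (j : ℕ) := by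
    intro j
    rw [List.get_eq_getElem]
    exact List.getElem_ofFn _
  refine ⟨List.ofFn (fun ix : Fin s.length => (emb ix : ℕ)), ?_, ?_, ?_, ?_, ?_, ?_⟩
  · have : 0 < s.length := by omega
    intro h
    rw [List.eq_nil_iff_forall_not_mem] at h
    exact h (emb ⟨0, this⟩ : ℕ) ((List.mem_ofFn.mpr ⟨⟨0, this⟩, rfl⟩))
  · rw [List.pairwise_ofFn]
    intro i j hij
    exact_mod_cast emb.strictMono hij
  · intro x hx
    obtain ⟨ix, rfl⟩ := List.mem_ofFn.mp hx
    have h1 := (emb ix).isLt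
    show (emb ix : ℕ) ≤ P.natDegree
    omega
  · intro x hx
    obtain ⟨ix, rfl⟩ := List.mem_ofFn.mp hx
    have hval : P.coeff (emb ix : ℕ) = s.get ix := by
      rw [hemb ix, hgetl]
    show P.coeff (emb ix : ℕ) ≠ 0
    rw [hval]
    exact hmnz _ (hsub.mem (by rw [List.get_eq_getElem]; exact List.getElem_mem _))
  · have hmap : (List.ofFn (fun ix : Fin s.length => (emb ix : ℕ))).map P.coeff = s := by
      rw [List.map_ofFn]
      have : ∀ ix : Fin s.length, P.coeff (emb ix : ℕ) = s.get ix := by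
        intro ix; rw [hemb ix, hgetl]
      calc List.ofFn (P.coeff ∘ fun ix : Fin s.length => (emb ix : ℕ))
          = List.ofFn s.get := by
            congr 1; funext ix; exact this ix
        _ = s := List.ofFn_get s
    rw [hmap]
    exact hch
  · rw [List.length_ofFn, hslen]
    have hv : v P = countAdj m := signChanges_eq _
    rw [hv]

lemma v_mul {Q : Polynomial ℝ} (hQ : Q ≠ 0) {r : ℝ} (hr : 0 < r) :
    v Q + 1 ≤ v ((X - C r) * Q) := by
  have hP : (X - C r) * Q ≠ 0 := mul_ne_zero (X_sub_C_ne_zero r) hQ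
  have hPdeg : ((X - C r) * Q).natDegree = Q.natDegree + 1 := by
    rw [natDegree_mul (X_sub_C_ne_zero r) hQ, natDegree_X_sub_C]
    omega
  have hg0 : ((X - C r) * Q).coeff 0 = -(r * Q.coeff 0) := by
    rw [Polynomial.mul_coeff_zero]
    simp
  have hg : ∀ m, ((X - C r) * Q).coeff (m + 1) = Q.coeff m - r * Q.coeff (m + 1) := by
    intro m
    rw [sub_mul, Polynomial.coeff_sub, Polynomial.coeff_X_mul, Polynomial.coeff_C_mul]
  have hM1 : Q.coeff (Q.natDegree + 1) = 0 :=
    Polynomial.coeff_eq_zero_of_natDegree_lt (lt_add_one _)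
  have hfM : Q.coeff Q.natDegree ≠ 0 := fun h => hQ (Polynomial.leadingCoeff_eq_zero.mp h)
  obtain ⟨js, hne, hpair, hle, hnz, halt, hlen⟩ := exists_index_chain Q hQ
  rcases lt_trichotomy (Q.coeff (js.getLast hne) * Q.coeff Q.natDegree) 0 with hs | hs | hs
  · -- impossible: this would give a longer chain in Q
    exfalso
    have hlastM : js.getLast hne < Q.natDegree := by
      have h2 : js.getLast hne ≤ Q.natDegree := hle _ (List.getLast_mem hne)
      have h3 : js.getLast hne ≠ Q.natDegree := by
        intro h; rw [h] at hs
        nlinarith [mul_self_nonneg (Q.coeff Q.natDegree)]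
      omega
    have hjslt : ∀ x ∈ js, x < Q.natDegree := fun x hx =>
      lt_of_le_of_lt (pairwise_le_getLast hpair hne x hx) hlastM
    have hcontr := v_ge_of_chain Q (js ++ [Q.natDegree]) ?_ ?_ ?_ ?_
    · rw [List.length_append, hlen] at hcontr
      simp only [List.length_singleton] at hcontr
      omega
    · rw [List.length_append, hlen]
      simp
    · rw [List.pairwise_append]
      refine ⟨hpair, List.pairwise_singleton _ _, ?_⟩
      intro x hx y hy
      simp at hy; subst hy
      exact hjslt x hx
    · intro x hx
      rcases List.mem_append.mp hx with hx | hx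
      · have := hle x hx; omega
      · simp at hx; omega
    · rw [List.map_append]
      rw [List.Chain', List.isChain_append]
      refine ⟨halt, by simp, ?_⟩
      intro x hx y hy
      simp only [List.map_cons, List.map_nil, List.head?_cons, Option.mem_def,
        Option.some.injEq] at hy
      subst hy
      have hmapne : js.map Q.coeff ≠ [] := by
        intro h
        exact hne (List.map_eq_nil_iff.mp h)
      rw [List.getLast?_eq_getLast_of_ne_nil hmapne] at hx
      simp only [Option.mem_def, Option.some.injEq] at hx
      subst hx
      rw [List.getLast_map]
      exact hs
  · exact absurd hs (mul_ne_zero (hnz _ (List.getLast_mem hne)) hfM)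
  · obtain ⟨i0, rest, rfl⟩ : ∃ i0 rest, js = i0 :: rest := by
      cases js with
      | nil => exact absurd rfl hne
      | cons a t => exact ⟨a, t, rfl⟩
    have hch : List.Chain (· < ·) i0 rest := List.isChain_iff_pairwise.mpr hpair
    obtain ⟨ms, hmsch, hmsalt, hmslen, hmsbd⟩ :=
      key_seq hr hg0 hg Q.natDegree hM1 i0 rest hch halt (fun x hx => hle x hx) hs
    have hfin := v_ge_of_chain ((X - C r) * Q) ms (by omega)
      (List.isChain_iff_pairwise.mp hmsch)
      (fun x hx => by rw [hPdeg]; exact hmsbd x hx) hmsalt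
    rw [hmslen] at hfin
    have : rest.length + 1 = v Q + 1 := by simpa using hlen
    omega

lemma descartes_pos_aux : ∀ (n : ℕ) (Q : Polynomial ℝ), Q ≠ 0 → zpos Q = n → zpos Q ≤ v Q := by
  intro n
  induction n with
  | zero => intro Q _ h; rw [h]; exact Nat.zero_le _
  | succ n ih =>
      intro Q hQ h
      have hpos : 0 < (Q.roots.filter (fun x => 0 < x)).card := by
        have : zpos Q = (Q.roots.filter (fun x => 0 < x)).card := rfl
        omega
      obtain ⟨r, hr⟩ := Multiset.card_pos_iff_exists_mem.mp hpos
      rw [Multiset.mem_filter] at hr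
      have hroot : Q.IsRoot r := Polynomial.isRoot_of_mem_roots hr.1
      obtain ⟨Q₁, hQ₁⟩ := Polynomial.dvd_iff_isRoot.mpr hroot
      have hQ1ne : Q₁ ≠ 0 := by rintro rfl; rw [mul_zero] at hQ₁; exact hQ hQ₁
      have hz : zpos Q = zpos Q₁ + 1 := by
        unfold zpos
        rw [hQ₁, Polynomial.roots_mul (hQ₁ ▸ hQ), Polynomial.roots_X_sub_C,
          Multiset.filter_add, Multiset.card_add, Multiset.filter_singleton]
        simp [hr.2]
        omega
      have hih := ih Q₁ hQ1ne (by omega)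
      calc zpos Q = zpos Q₁ + 1 := hz
        _ ≤ v Q₁ + 1 := by omega
        _ ≤ v ((X - C r) * Q₁) := v_mul hQ1ne hr.2
        _ = v Q := by rw [← hQ₁]

lemma descartes_pos {Q : Polynomial ℝ} (hQ : Q ≠ 0) : zpos Q ≤ v Q :=
  descartes_pos_aux (zpos Q) Q hQ rfl

lemma comp_neg_comp_neg (P : Polynomial ℝ) : (P.comp (-X)).comp (-X) = P := by
  rw [Polynomial.comp_assoc]
  simp

lemma comp_neg_ne_zero {P : Polynomial ℝ} (hP : P ≠ 0) : P.comp (-X) ≠ 0 := by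
  intro h
  have := comp_neg_comp_neg P
  rw [h, Polynomial.zero_comp] at this
  exact hP this.symm

lemma dvd_comp_neg {y : ℝ} {n : ℕ} {P : Polynomial ℝ} (h : (X - C (-y)) ^ n ∣ P) :
    (X - C y) ^ n ∣ P.comp (-X) := by
  obtain ⟨S, rfl⟩ := h
  rw [Polynomial.mul_comp, Polynomial.pow_comp, Polynomial.sub_comp, Polynomial.X_comp,
    Polynomial.C_comp]
  have h1 : ((-X : Polynomial ℝ) - C (-y)) = -(X - C y) := by
    rw [map_neg]; ring
  rw [h1, neg_pow]
  exact ⟨(-1) ^ n * S.comp (-X), by ring⟩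

lemma rm_comp_neg {P : Polynomial ℝ} (hP : P ≠ 0) (y : ℝ) :
    Polynomial.rootMultiplicity y (P.comp (-X)) = Polynomial.rootMultiplicity (-y) P := by
  have hC : P.comp (-X) ≠ 0 := comp_neg_ne_zero hP
  apply _root_.le_antisymm
  · rw [Polynomial.le_rootMultiplicity_iff hP]
    have h1 : (X - C y) ^ (Polynomial.rootMultiplicity y (P.comp (-X))) ∣ P.comp (-X) :=
      Polynomial.pow_rootMultiplicity_dvd _ _
    have h2 : (X - C (-(-y))) ^ (Polynomial.rootMultiplicity y (P.comp (-X))) ∣ P.comp (-X) := by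
      rw [neg_neg]; exact h1
    have h3 := dvd_comp_neg h2
    rwa [comp_neg_comp_neg] at h3
  · rw [Polynomial.le_rootMultiplicity_iff hC]
    exact dvd_comp_neg (Polynomial.pow_rootMultiplicity_dvd _ _)

lemma roots_comp_neg (P : Polynomial ℝ) (hP : P ≠ 0) :
    (P.comp (-X)).roots = P.roots.map (fun x => -x) := by
  have hC : P.comp (-X) ≠ 0 := comp_neg_ne_zero hP
  ext a
  rw [Polynomial.count_roots, rm_comp_neg hP]
  have : a = -(-a) := by ring
  conv_rhs => rw [this]
  rw [Multiset.count_map_eq_count' _ _ (fun x y h => by linarith [neg_injective h] : Function.Injective (fun x : ℝ => -x))]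
  rw [Polynomial.count_roots]

/-- Descartes's rule of signs (negative part): `z⁻(P) ≤ c(P)`. -/
theorem descartes_rule_of_signs_neg (P : Polynomial ℝ) (hP : P ≠ 0) :
    zneg P ≤ c P := by
  have hC : P.comp (-X) ≠ 0 := comp_neg_ne_zero hP
  have h1 : zneg P = zpos (P.comp (-X)) := by
    unfold zneg zpos
    rw [roots_comp_neg P hP, ← Multiset.countP_eq_card_filter, ← Multiset.countP_eq_card_filter,
      Multiset.countP_map, ← Multiset.countP_eq_card_filter]
    apply Multiset.countP_congr rfl
    intro x _
    simp
  rw [h1]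
  exact descartes_pos hC
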